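/- There exists a relation ⊵ on a graded vector space V over ℤ/2 (concentrated in degree 0, with V_0 = (ℤ/2)^3) that satisfies all four properties of a bilinear relation (v ⊵ w whenever v = 0 or w = 0; scalar stability; additivity in each argument for elements of equal degree) but is not bilinear, i.e., there is no vector subspace R ⊆ V_0 ⊗ V_0 with v ⊵ w iff v ⊗ w ∈ R. -/
import Mathlib


open TensorProduct

abbrev V3 : Type := Fin 3 → ZMod 2

def myRel (v w : V3) : Prop :=
  v = 0 ∨ w = 0 ∨
  (v = ![1,0,0] ∧ w = ![0,1,1]) ∨
  (v = ![0,1,0] ∧ w = ![0,1,0]) ∨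
  (v = ![0,0,1] ∧ w = ![1,1,0]) ∨
  (v = ![1,1,0] ∧ w = ![1,0,0]) ∨
  (v = ![0,1,1] ∧ w = ![0,0,1])

instance : DecidablePred (fun p : V3 × V3 => myRel p.1 p.2) := by
  intro p; unfold myRel; infer_instance

instance (v w : V3) : Decidable (myRel v w) := by
  unfold myRel; infer_instance

/-- There is a relation on the vector space `(ℤ/2)³` (viewed as a graded vector space
concentrated in degree `0`) that satisfies the four closure properties of a bilinear
relation but is not bilinear, i.e., it is not defined by membership of `v ⊗ w` in a
vector subspace of `V ⊗ V`. -/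
theorem stmt4 :
    ∃ r : (Fin 3 → ZMod 2) → (Fin 3 → ZMod 2) → Prop,
      (∀ v w : Fin 3 → ZMod 2, v = 0 ∨ w = 0 → r v w) ∧
      (∀ (v w : Fin 3 → ZMod 2) (a b : ZMod 2), r v w → r (a • v) (b • w)) ∧
      (∀ v v' w : Fin 3 → ZMod 2, r v w → r v' w → r (v + v') w) ∧
      (∀ v w w' : Fin 3 → ZMod 2, r v w → r v w' → r v (w + w')) ∧
      ¬ ∃ R : Submodule (ZMod 2) ((Fin 3 → ZMod 2) ⊗[ZMod 2] (Fin 3 → ZMod 2)),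
          ∀ v w : Fin 3 → ZMod 2, r v w ↔ v ⊗ₜ[ZMod 2] w ∈ R := by
  refine ⟨myRel, ?_, ?_, ?_, ?_, ?_⟩
  · decide
  · decide
  · decide
  · decide
  · rintro ⟨R, hR⟩
    have h1 : (![1,0,0] : V3) ⊗ₜ[ZMod 2] (![0,1,1] : V3) ∈ R := (hR _ _).mp (by decide)
    have h2 : (![0,1,0] : V3) ⊗ₜ[ZMod 2] (![0,1,0] : V3) ∈ R := (hR _ _).mp (by decide)
    have h3 : (![0,0,1] : V3) ⊗ₜ[ZMod 2] (![1,1,0] : V3) ∈ R := (hR _ _).mp (by decide)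
    have h4 : (![1,1,0] : V3) ⊗ₜ[ZMod 2] (![1,0,0] : V3) ∈ R := (hR _ _).mp (by decide)
    have h5 : (![0,1,1] : V3) ⊗ₜ[ZMod 2] (![0,0,1] : V3) ∈ R := (hR _ _).mp (by decide)
    have hs : (![1,1,1] : V3) ⊗ₜ[ZMod 2] (![1,1,1] : V3) ∈ R := by
      have e1 : (![1,1,1] : V3) = ![1,0,0] + ![0,1,0] + ![0,0,1] := by decide
      have e2 : (![0,1,1] : V3) = ![0,1,0] + ![0,0,1] := by decide
      have e3 : (![1,1,0] : V3) = ![1,0,0] + ![0,1,0] := by decide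
      have key : (![1,1,1] : V3) ⊗ₜ[ZMod 2] (![1,1,1] : V3) =
          (![1,0,0] : V3) ⊗ₜ[ZMod 2] (![0,1,1] : V3) +
          (![0,1,0] : V3) ⊗ₜ[ZMod 2] (![0,1,0] : V3) +
          (![0,0,1] : V3) ⊗ₜ[ZMod 2] (![1,1,0] : V3) +
          (![1,1,0] : V3) ⊗ₜ[ZMod 2] (![1,0,0] : V3) +
          (![0,1,1] : V3) ⊗ₜ[ZMod 2] (![0,0,1] : V3) := by
        rw [e1, e2, e3]
        simp only [TensorProduct.add_tmul, TensorProduct.tmul_add]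
        abel
      rw [key]
      exact R.add_mem (R.add_mem (R.add_mem (R.add_mem h1 h2) h3) h4) h5
    have : myRel ![1,1,1] ![1,1,1] := (hR _ _).mpr hs
    revert this
    decide
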